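/- If S is a subset of the affine plane F_p^2 with |S| ≥ p+1, then every direction is determined by some pair of distinct points of S, i.e., for every nonzero vector u in F_p^2 there exist distinct points w1, w2 in S with w1 - w2 a scalar multiple of u. -/
import Mathlib

theorem stmt_0 (p : ℕ) [Fact p.Prime] (S : Finset (ZMod p × ZMod p))
    (hS : p + 1 ≤ S.card) (u : ZMod p × ZMod p) (hu : u ≠ 0) :
    ∃ w1 ∈ S, ∃ w2 ∈ S, w1 ≠ w2 ∧ ∃ c : ZMod p, w1 - w2 = c • u := by
  set M : Submodule (ZMod p) (ZMod p × ZMod p) := Submodule.span (ZMod p) {u} with hM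
  have hfin : Module.finrank (ZMod p) ((ZMod p × ZMod p) ⧸ M) = 1 := by
    have h1 : Module.finrank (ZMod p) M = 1 := finrank_span_singleton hu
    have h2 := Submodule.finrank_quotient_add_finrank M
    have h3 : Module.finrank (ZMod p) (ZMod p × ZMod p) = 2 := by
      simp [Module.finrank_prod]
    omega
  have hcard : Fintype.card ((ZMod p × ZMod p) ⧸ M) = p := by
    have := Module.card_eq_pow_finrank (K := ZMod p) (V := (ZMod p × ZMod p) ⧸ M)
    rw [hfin] at this
    simpa [ZMod.card] using this
  have hmaps : ∀ w ∈ S, M.mkQ w ∈ (Finset.univ : Finset ((ZMod p × ZMod p) ⧸ M)) := by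
    intro w _; exact Finset.mem_univ _
  have hlt : (Finset.univ : Finset ((ZMod p × ZMod p) ⧸ M)).card < S.card := by
    rw [Finset.card_univ, hcard]; omega
  obtain ⟨w1, hw1, w2, hw2, hne, heq⟩ :=
    Finset.exists_ne_map_eq_of_card_lt_of_maps_to hlt hmaps
  refine ⟨w1, hw1, w2, hw2, hne, ?_⟩
  have hmem : w1 - w2 ∈ M := (Submodule.Quotient.eq M).mp heq
  rw [hM, Submodule.mem_span_singleton] at hmem
  obtain ⟨c, hc⟩ := hmem
  exact ⟨c, hc.symm⟩
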